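/- arXiv:2210.17513 — 2 statements merged into one kernel-verified Lean document; each statement's English description precedes it below -/
import Mathlib

section
/- Let Φ be a faithful quantum channel with full-rank fixed state σ, and let |λ| = 1. Then X is an eigenvector of Φ with eigenvalue λ if and only if σ^{-1/2} X σ^{-1/2} is an eigenvector of the Hilbert–Schmidt adjoint Φ† with eigenvalue λ̄. -/
open Matrix
open scoped ComplexOrder
set_option linter.unusedSectionVars false
set_option maxHeartbeats 1600000

/-- The algebra of `d × d` complex matrices. -/
abbrev Mat (d : ℕ) := Matrix (Fin d) (Fin d) ℂ

/-- A linear map on matrices is positive if it maps positive semidefinite matrices to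
positive semidefinite matrices. -/
def IsPositiveMap {d : ℕ} (Φ : Module.End ℂ (Mat d)) : Prop :=
  ∀ X : Mat d, X.PosSemidef → (Φ X).PosSemidef

/-- A linear map on matrices is trace-preserving. -/
def IsTracePreserving {d : ℕ} (Φ : Module.End ℂ (Mat d)) : Prop :=
  ∀ X : Mat d, (Φ X).trace = X.trace

/-- The block-wise application `(Φ ⊗ id_n)(X)` of `Φ` to a matrix on `ℂ^d ⊗ ℂ^n`. -/
def blockApply {d : ℕ} (Φ : Module.End ℂ (Mat d)) (n : ℕ)
    (X : Matrix (Fin d × Fin n) (Fin d × Fin n) ℂ) :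
    Matrix (Fin d × Fin n) (Fin d × Fin n) ℂ :=
  Matrix.of fun p q => Φ (Matrix.of fun i j => X (i, p.2) (j, q.2)) p.1 q.1

/-- Complete positivity: `Φ ⊗ id_n` is positive for every `n`. -/
def IsCompletelyPositive {d : ℕ} (Φ : Module.End ℂ (Mat d)) : Prop :=
  ∀ (n : ℕ) (X : Matrix (Fin d × Fin n) (Fin d × Fin n) ℂ),
    X.PosSemidef → (blockApply Φ n X).PosSemidef

/-- The attractor (peripheral) subspace: the span of eigenvectors corresponding to
eigenvalues of modulus one. -/
noncomputable def attrSubspace {d : ℕ} (Φ : Module.End ℂ (Mat d)) : Submodule ℂ (Mat d) :=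
  ⨆ (μ : ℂ) (_ : ‖μ‖ = 1), Module.End.eigenspace Φ μ

namespace PEC

variable {m : Type*} [Fintype m] [DecidableEq m]

lemma trace_form (A B : Matrix m m ℂ) :
    (Aᴴ * B).trace = ∑ i, ∑ j, star (A j i) * B j i := by
  simp [Matrix.trace, Matrix.mul_apply, Matrix.diag, Matrix.conjTranspose_apply]

lemma trace_ctm_self_nonneg (A : Matrix m m ℂ) : 0 ≤ (Aᴴ * A).trace := by
  rw [trace_form]
  exact Finset.sum_nonneg fun i _ => Finset.sum_nonneg fun j _ => star_mul_self_nonneg _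

lemma trace_ctm_self_eq_zero {A : Matrix m m ℂ} (h : (Aᴴ * A).trace = 0) : A = 0 := by
  rw [trace_form] at h
  ext j i
  have h1 : ∀ i ∈ Finset.univ, (0:ℂ) ≤ ∑ j, star (A j i) * A j i :=
    fun i _ => Finset.sum_nonneg fun j _ => star_mul_self_nonneg _
  have h2 := (Finset.sum_eq_zero_iff_of_nonneg h1).mp h i (Finset.mem_univ i)
  have h3 : ∀ j ∈ Finset.univ, (0:ℂ) ≤ star (A j i) * A j i :=
    fun j _ => star_mul_self_nonneg _
  have h4 := (Finset.sum_eq_zero_iff_of_nonneg h3).mp h2 j (Finset.mem_univ j)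
  simpa [Complex.star_def, Complex.mul_conj', Complex.ext_iff, ← Complex.normSq_eq_norm_sq,
    Complex.normSq_eq_zero] using h4

lemma trace_psd_nonneg {A : Matrix m m ℂ} (hA : A.PosSemidef) : 0 ≤ A.trace := by
  open scoped MatrixOrder in
  obtain ⟨B, rfl⟩ : ∃ B : Matrix m m ℂ, A = Bᴴ * B :=
    CStarAlgebra.nonneg_iff_eq_star_mul_self.mp hA.nonneg
  exact trace_ctm_self_nonneg B

lemma trace_psd_mul_nonneg {A B : Matrix m m ℂ} (hA : A.PosSemidef) (hB : B.PosSemidef) :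
    0 ≤ (A * B).trace := by
  open scoped MatrixOrder in
  obtain ⟨C, rfl⟩ : ∃ C : Matrix m m ℂ, B = Cᴴ * C :=
    CStarAlgebra.nonneg_iff_eq_star_mul_self.mp hB.nonneg
  have : (A * (Cᴴ * C)).trace = (C * A * Cᴴ).trace := by
    rw [← Matrix.trace_mul_cycle]
    rw [Matrix.mul_assoc]
  rw [this]
  exact trace_psd_nonneg (hA.mul_mul_conjTranspose_same C)

lemma star_trace (A : Matrix m m ℂ) : star A.trace = (Aᴴ).trace := by
  simp [Matrix.trace, Matrix.diag, Matrix.conjTranspose_apply]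

lemma eq_zero_of_forall_trace {A : Matrix m m ℂ} (h : ∀ B, (Aᴴ * B).trace = 0) : A = 0 :=
  trace_ctm_self_eq_zero (h A)

lemma ext_of_forall_trace {A C : Matrix m m ℂ} (h : ∀ B, (Aᴴ * B).trace = (Cᴴ * B).trace) :
    A = C := by
  have : ∀ B, ((A - C)ᴴ * B).trace = 0 := by
    intro B
    simp [Matrix.conjTranspose_sub, Matrix.sub_mul, sub_eq_zero, h B]
  have := eq_zero_of_forall_trace this
  exact sub_eq_zero.mp this


lemma isHermitian_exists_psd_sub {H : Matrix m m ℂ} (hH : H.IsHermitian) :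
    ∃ P Q : Matrix m m ℂ, P.PosSemidef ∧ Q.PosSemidef ∧ H = P - Q := by
  set U : Matrix m m ℂ := (hH.eigenvectorUnitary : Matrix m m ℂ) with hU
  refine ⟨U * diagonal (fun i => ((max (hH.eigenvalues i) 0 : ℝ) : ℂ)) * Uᴴ,
          U * diagonal (fun i => ((max (-hH.eigenvalues i) 0 : ℝ) : ℂ)) * Uᴴ, ?_, ?_, ?_⟩
  · refine (PosSemidef.diagonal ?_).mul_mul_conjTranspose_same U
    intro i
    simp only [Pi.zero_apply]
    rw [Complex.zero_le_real]; exact le_max_right _ _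
  · refine (PosSemidef.diagonal ?_).mul_mul_conjTranspose_same U
    intro i
    simp only [Pi.zero_apply]
    rw [Complex.zero_le_real]; exact le_max_right _ _
  · rw [← Matrix.sub_mul, ← Matrix.mul_sub, Matrix.diagonal_sub]
    have hfun : (fun i => ((max (hH.eigenvalues i) 0 : ℝ) : ℂ) - ((max (-hH.eigenvalues i) 0 : ℝ) : ℂ))
        = fun i => ((hH.eigenvalues i : ℝ) : ℂ) := by
      funext i
      rw [← Complex.ofReal_sub, max_zero_sub_max_neg_zero_eq_self]
    rw [hfun]
    conv_lhs => rw [hH.spectral_theorem]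
    simp only [Matrix.star_eq_conjTranspose, Function.comp_def]
    rw [hU]
    rfl

variable (F G : Module.End ℂ (Matrix m m ℂ))

lemma posmap_hermitian (hpos : ∀ X : Matrix m m ℂ, X.PosSemidef → (F X).PosSemidef)
    {H : Matrix m m ℂ} (hH : H.IsHermitian) : (F H).IsHermitian := by
  obtain ⟨P, Q, hP, hQ, rfl⟩ := isHermitian_exists_psd_sub hH
  rw [map_sub]
  exact ((hpos P hP).isHermitian).sub ((hpos Q hQ).isHermitian)

lemma posmap_conjTranspose (hpos : ∀ X : Matrix m m ℂ, X.PosSemidef → (F X).PosSemidef)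
    (B : Matrix m m ℂ) : F Bᴴ = (F B)ᴴ := by
  set H : Matrix m m ℂ := ((2:ℂ)⁻¹) • (B + Bᴴ) with hHdef
  set K : Matrix m m ℂ := (Complex.I * (2:ℂ)⁻¹) • (Bᴴ - B) with hKdef
  have hHh : H.IsHermitian := by
    rw [Matrix.IsHermitian, hHdef, Matrix.conjTranspose_smul, Matrix.conjTranspose_add,
      Matrix.conjTranspose_conjTranspose]
    simp [add_comm]
  have hKh : K.IsHermitian := by
    rw [Matrix.IsHermitian, hKdef, Matrix.conjTranspose_smul, Matrix.conjTranspose_sub,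
      Matrix.conjTranspose_conjTranspose]
    have hs : star (Complex.I * (2:ℂ)⁻¹) = -(Complex.I * (2:ℂ)⁻¹) := by
      simp [Complex.ext_iff]
    rw [hs, neg_smul, ← smul_neg, neg_sub]
  have hB : B = H + Complex.I • K := by
    rw [hHdef, hKdef, smul_smul]
    have : Complex.I * (Complex.I * (2:ℂ)⁻¹) = -(2:ℂ)⁻¹ := by
      rw [← mul_assoc, Complex.I_mul_I]; ring
    rw [this]
    module
  have hBH : Bᴴ = H - Complex.I • K := by
    rw [hHdef, hKdef, smul_smul]
    have : Complex.I * (Complex.I * (2:ℂ)⁻¹) = -(2:ℂ)⁻¹ := by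
      rw [← mul_assoc, Complex.I_mul_I]; ring
    rw [this]
    module
  have hFH := posmap_hermitian F hpos hHh
  have hFK := posmap_hermitian F hpos hKh
  rw [hBH, hB]
  simp only [map_sub, map_add, _root_.map_smul]
  rw [Matrix.conjTranspose_add, Matrix.conjTranspose_smul, hFH.eq, hFK.eq]
  rw [Complex.star_def, Complex.conj_I, neg_smul, sub_eq_add_neg]

lemma psd_of_forall_trace {M : Matrix m m ℂ} (hM : M.IsHermitian)
    (h : ∀ B : Matrix m m ℂ, B.PosSemidef → 0 ≤ (M * B).trace) : M.PosSemidef := by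
  refine .of_dotProduct_mulVec_nonneg hM fun x => ?_
  have hB : (vecMulVec x (star x)).PosSemidef := by
    rw [Matrix.vecMulVec_eq Unit, ← Matrix.conjTranspose_replicateCol]
    exact posSemidef_self_mul_conjTranspose _
  have := h _ hB
  have heq : (M * vecMulVec x (star x)).trace = star x ⬝ᵥ M *ᵥ x := by
    simp only [Matrix.trace, Matrix.diag, Matrix.mul_apply, Matrix.vecMulVec_apply,
      dotProduct, Matrix.mulVec, Finset.mul_sum]
    exact Finset.sum_congr rfl fun i _ => Finset.sum_congr rfl fun j _ => by ring
  rwa [heq] at this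

lemma adjoint_posmap (hpos : ∀ X : Matrix m m ℂ, X.PosSemidef → (F X).PosSemidef)
    (hadj : ∀ A B : Matrix m m ℂ, ((G A)ᴴ * B).trace = (Aᴴ * (F B)).trace) :
    ∀ X : Matrix m m ℂ, X.PosSemidef → (G X).PosSemidef := by
  intro A hA
  have hherm : (G A).IsHermitian := by
    have key : ∀ B, (((G A)ᴴ)ᴴ * B).trace = ((G A)ᴴ * B).trace := by
      intro B
      rw [Matrix.conjTranspose_conjTranspose]
      calc (G A * B).trace
          = star (((G A * B)ᴴ).trace) := by rw [← star_trace, star_star]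
        _ = star (((G A)ᴴ * Bᴴ).trace) := by rw [Matrix.conjTranspose_mul, Matrix.trace_mul_comm]
        _ = star ((Aᴴ * F Bᴴ).trace) := by rw [hadj]
        _ = star ((Aᴴ * (F B)ᴴ).trace) := by rw [posmap_conjTranspose F hpos]
        _ = ((Aᴴ * (F B)ᴴ)ᴴ).trace := star_trace _
        _ = (F B * A).trace := by
            rw [Matrix.conjTranspose_mul, Matrix.conjTranspose_conjTranspose,
              Matrix.conjTranspose_conjTranspose]
        _ = (Aᴴ * F B).trace := by
            rw [Matrix.trace_mul_comm]
            conv_lhs => rw [← hA.isHermitian.eq]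
        _ = ((G A)ᴴ * B).trace := (hadj A B).symm
    exact ext_of_forall_trace key
  refine psd_of_forall_trace hherm fun B hB => ?_
  have h2 : (G A * B).trace = (A * F B).trace := by
    have := hadj A B
    rwa [hherm.eq, hA.isHermitian.eq] at this
  rw [h2]
  exact trace_psd_mul_nonneg hA (hpos B hB)


section Block
variable {d : ℕ}

/-- blocks of a matrix on a product space -/
def blk {n : ℕ} (X : Matrix (Fin d × Fin n) (Fin d × Fin n) ℂ) (k l : Fin n) : Mat d :=
  Matrix.of fun i j => X (i, k) (j, l)

lemma blk_apply {n : ℕ} (X : Matrix (Fin d × Fin n) (Fin d × Fin n) ℂ) (k l : Fin n)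
    (i j : Fin d) : blk X k l i j = X (i, k) (j, l) := rfl

lemma blockApply_apply (Φ : Module.End ℂ (Mat d)) (n : ℕ)
    (X : Matrix (Fin d × Fin n) (Fin d × Fin n) ℂ) (p q : Fin d × Fin n) :
    blockApply Φ n X p q = Φ (blk X p.2 q.2) p.1 q.1 := rfl

lemma blk_blockApply (Ψ : Module.End ℂ (Mat d)) (n : ℕ)
    (X : Matrix (Fin d × Fin n) (Fin d × Fin n) ℂ) (k l : Fin n) :
    blk (blockApply Ψ n X) k l = Ψ (blk X k l) := rfl

lemma blockApply_add (Φ : Module.End ℂ (Mat d)) (n : ℕ)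
    (X Y : Matrix (Fin d × Fin n) (Fin d × Fin n) ℂ) :
    blockApply Φ n (X + Y) = blockApply Φ n X + blockApply Φ n Y := by
  ext p q
  have h : (Matrix.of fun i j => (X + Y) (i, p.2) (j, q.2))
      = (Matrix.of fun i j => X (i, p.2) (j, q.2)) + (Matrix.of fun i j => Y (i, p.2) (j, q.2)) := by
    ext i j; simp
  show Φ _ p.1 q.1 = _
  rw [h, map_add]
  simp [blockApply]

lemma blockApply_smul (Φ : Module.End ℂ (Mat d)) (n : ℕ) (a : ℂ)
    (X : Matrix (Fin d × Fin n) (Fin d × Fin n) ℂ) :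
    blockApply Φ n (a • X) = a • blockApply Φ n X := by
  ext p q
  have h : (Matrix.of fun i j => (a • X) (i, p.2) (j, q.2))
      = a • (Matrix.of fun i j => X (i, p.2) (j, q.2)) := by
    ext i j; simp
  show Φ _ p.1 q.1 = _
  rw [h, _root_.map_smul]
  simp [blockApply]

/-- `blockApply` as a linear endomorphism. -/
def blockApplyLin (Φ : Module.End ℂ (Mat d)) (n : ℕ) :
    Module.End ℂ (Matrix (Fin d × Fin n) (Fin d × Fin n) ℂ) where
  toFun := blockApply Φ n
  map_add' := blockApply_add Φ n
  map_smul' := blockApply_smul Φ n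

lemma sum_swap4 {M : Type*} [AddCommMonoid M] {α β γ δ : Type*}
    [Fintype α] [Fintype β] [Fintype γ] [Fintype δ] (f : α → β → γ → δ → M) :
    ∑ a, ∑ b, ∑ c, ∑ e, f a b c e = ∑ b, ∑ e, ∑ a, ∑ c, f a b c e := by
  rw [Finset.sum_comm]
  refine Finset.sum_congr rfl fun b _ => ?_
  calc ∑ a, ∑ c, ∑ e, f a b c e
      = ∑ a, ∑ e, ∑ c, f a b c e := Finset.sum_congr rfl fun a _ => Finset.sum_comm
    _ = ∑ e, ∑ a, ∑ c, f a b c e := Finset.sum_comm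

lemma trace_blocks {n : ℕ} (Z R : Matrix (Fin d × Fin n) (Fin d × Fin n) ℂ) :
    (Zᴴ * R).trace = ∑ k : Fin n, ∑ l : Fin n, ((blk Z l k)ᴴ * blk R l k).trace := by
  rw [trace_form]
  simp only [trace_form, blk_apply]
  simp only [Fintype.sum_prod_type]
  exact sum_swap4 (fun i k j l => star (Z (j, l) (i, k)) * R (j, l) (i, k))

lemma block_adjoint (Φ Ψ : Module.End ℂ (Mat d))
    (hadj : ∀ A B : Mat d, (Aᴴ * Φ B).trace = ((Ψ A)ᴴ * B).trace) (n : ℕ)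
    (X Y : Matrix (Fin d × Fin n) (Fin d × Fin n) ℂ) :
    (Xᴴ * blockApply Φ n Y).trace = ((blockApply Ψ n X)ᴴ * Y).trace := by
  rw [trace_blocks, trace_blocks]
  refine Finset.sum_congr rfl fun k _ => Finset.sum_congr rfl fun l _ => ?_
  rw [blk_blockApply]
  exact hadj _ _

lemma cp_positive (Φ : Module.End ℂ (Mat d)) (hCP : IsCompletelyPositive Φ) :
    ∀ X : Mat d, X.PosSemidef → (Φ X).PosSemidef := by
  intro Y hY
  set e : Fin d × Fin 1 ≃ Fin d := Equiv.prodUnique (Fin d) (Fin 1) with he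
  have h1 : (Y.submatrix e e).PosSemidef := hY.submatrix e
  have h2 := hCP 1 _ h1
  have h3 : blockApply Φ 1 (Y.submatrix (e : Fin d × Fin 1 → Fin d) e) = (Φ Y).submatrix e e := by
    ext p q
    show Φ (Matrix.of fun i j => Y.submatrix (e : Fin d × Fin 1 → Fin d) e (i, p.2) (j, q.2)) p.1 q.1
        = Φ Y (e p) (e q)
    have h4 : (Matrix.of fun i j => Y.submatrix (e : Fin d × Fin 1 → Fin d) e (i, p.2) (j, q.2)) = Y := by
      ext i j
      simp [he, Matrix.submatrix_apply]
    rw [h4]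
    have : e p = p.1 := by simp [he]
    have h5 : e q = q.1 := by simp [he]
    rw [this, h5]
  rw [h3] at h2
  exact (posSemidef_submatrix_equiv e).mp h2

end Block

section Psi
variable {d : ℕ}

def prodSum (d : ℕ) : (Fin d ⊕ Fin d) ≃ (Fin d × Fin 2) where
  toFun := Sum.elim (fun i => (i, 0)) (fun i => (i, 1))
  invFun p := if p.2 = 0 then Sum.inl p.1 else Sum.inr p.1
  left_inv x := by rcases x with i | i <;> simp
  right_inv p := by
    rcases p with ⟨i, k⟩
    fin_cases k <;> simp

@[simp] lemma prodSum_symm_zero (i : Fin d) : (prodSum d).symm (i, 0) = Sum.inl i := by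
  simp [prodSum, Equiv.symm]

@[simp] lemma prodSum_symm_one (i : Fin d) : (prodSum d).symm (i, 1) = Sum.inr i := by
  simp [prodSum, Equiv.symm]

variable (Φ Ψ : Module.End ℂ (Mat d))
variable (hCP : IsCompletelyPositive Φ) (hTP : IsTracePreserving Φ)
variable (hadj : ∀ A B : Mat d, (Aᴴ * Φ B).trace = ((Ψ A)ᴴ * B).trace)

include hCP hadj in
lemma psi_positive : ∀ X : Mat d, X.PosSemidef → (Ψ X).PosSemidef :=
  adjoint_posmap Φ Ψ (cp_positive Φ hCP) (fun A B => (hadj A B).symm)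

include hCP hadj in
lemma psi_conjTranspose (B : Mat d) : Ψ Bᴴ = (Ψ B)ᴴ :=
  posmap_conjTranspose Ψ (psi_positive Φ Ψ hCP hadj) B

include hTP hadj in
lemma psi_one : Ψ 1 = 1 := by
  refine ext_of_forall_trace (fun B => ?_)
  rw [← hadj]
  simp only [Matrix.conjTranspose_one, Matrix.one_mul]
  exact hTP B

include hCP hadj in
lemma psi2_positive : ∀ X : Matrix (Fin d × Fin 2) (Fin d × Fin 2) ℂ, X.PosSemidef →
    (blockApply Ψ 2 X).PosSemidef := by
  have := adjoint_posmap (blockApplyLin Φ 2) (blockApplyLin Ψ 2)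
    (fun X hX => hCP 2 X hX)
    (fun A B => (block_adjoint Φ Ψ hadj 2 A B).symm)
  exact this

include hCP hTP hadj in
lemma schwarz (A : Mat d) : (Ψ (Aᴴ * A) - (Ψ A)ᴴ * Ψ A).PosSemidef := by
  haveI : Invertible (1 : Mat d) := invertibleOne
  have hM0 : (fromBlocks (Aᴴ * A) Aᴴ A (1 : Mat d)).PosSemidef := by
    have h1 : (fromBlocks (Aᴴ * A) Aᴴ (Aᴴ)ᴴ (1 : Mat d)).PosSemidef := by
      rw [Matrix.PosDef.fromBlocks₂₂ _ _ Matrix.PosDef.one]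
      simp only [inv_one, Matrix.mul_one, Matrix.conjTranspose_conjTranspose, sub_self]
      exact Matrix.PosSemidef.zero
    simpa only [Matrix.conjTranspose_conjTranspose] using h1
  set ε : (Fin d × Fin 2) ≃ (Fin d ⊕ Fin d) := (prodSum d).symm with hε
  have hM : ((fromBlocks (Aᴴ * A) Aᴴ A (1 : Mat d)).submatrix ε ε).PosSemidef :=
    (posSemidef_submatrix_equiv ε).mpr hM0
  have hW := psi2_positive Φ Ψ hCP hadj _ hM
  have hWeq : blockApply Ψ 2 ((fromBlocks (Aᴴ * A) Aᴴ A (1 : Mat d)).submatrix ε ε)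
      = (fromBlocks (Ψ (Aᴴ * A)) (Ψ Aᴴ) (Ψ A) (Ψ 1)).submatrix ε ε := by
    ext p q
    obtain ⟨i, k⟩ := p
    obtain ⟨j, l⟩ := q
    fin_cases k <;> fin_cases l <;>
      · rw [blockApply_apply]
        simp [Matrix.submatrix_apply, hε, prodSum_symm_zero, prodSum_symm_one, blk,
          Matrix.fromBlocks_apply₁₁, Matrix.fromBlocks_apply₁₂,
          Matrix.fromBlocks_apply₂₁, Matrix.fromBlocks_apply₂₂]
        rfl
  rw [hWeq] at hW
  have hFB : (fromBlocks (Ψ (Aᴴ * A)) (Ψ Aᴴ) (Ψ A) (Ψ 1)).PosSemidef :=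
    (posSemidef_submatrix_equiv ε).mp hW
  rw [psi_one Φ Ψ hTP hadj, psi_conjTranspose Φ Ψ hCP hadj] at hFB
  have hFB2 : (fromBlocks (Ψ (Aᴴ * A)) ((Ψ A)ᴴ) (((Ψ A)ᴴ)ᴴ) (1 : Mat d)).PosSemidef := by
    simpa only [Matrix.conjTranspose_conjTranspose] using hFB
  have := (Matrix.PosDef.fromBlocks₂₂ _ _ Matrix.PosDef.one).mp hFB2
  simpa only [inv_one, Matrix.mul_one, Matrix.conjTranspose_conjTranspose] using this

end Psi

section Inj
variable {d : ℕ}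

lemma eig_inj_left (Φ Ψ : Module.End ℂ (Mat d))
    (hCP : IsCompletelyPositive Φ) (hTP : IsTracePreserving Φ)
    (hadj : ∀ A B : Mat d, (Aᴴ * Φ B).trace = ((Ψ A)ᴴ * B).trace)
    (σ t : Mat d) (hσ : σ.PosDef) (hfix : Φ σ = σ)
    (hinv : (t * t) * σ = 1)
    (μ : ℂ) (habs : ‖μ‖ = 1) (X : Mat d) (hX : Φ X = μ • X) :
    Ψ ((t * t) * X) = (starRingEnd ℂ μ) • ((t * t) * X) := by
  set c := (starRingEnd ℂ) μ with hc
  set A := (t * t) * X with hA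
  have hμc : μ * c = 1 := by
    rw [hc, Complex.mul_conj, Complex.normSq_eq_norm_sq, habs]; norm_num
  have hσt : σ * (t * t) = 1 := mul_eq_one_comm.mp hinv
  have hσA : σ * A = X := by rw [hA, ← Matrix.mul_assoc, hσt, Matrix.one_mul]
  have hσh : σᴴ = σ := hσ.isHermitian
  set r := (open scoped MatrixOrder in CFC.sqrt σ) with hr
  have hrr : r * r = σ :=
    (open scoped MatrixOrder in CFC.sqrt_mul_sqrt_self σ hσ.posSemidef.nonneg)
  have hrh : rᴴ = r := (open scoped MatrixOrder in (CFC.sqrt_nonneg σ).posSemidef.isHermitian)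
  set D := Ψ A - c • A with hD
  clear_value c A r D
  have hadj' : ∀ P Q : Mat d, (Pᴴ * Ψ Q).trace = ((Φ P)ᴴ * Q).trace := fun P Q => by
    have h1 := congrArg star (hadj Q P)
    rw [star_trace, star_trace, Matrix.conjTranspose_mul, Matrix.conjTranspose_mul,
      Matrix.conjTranspose_conjTranspose, Matrix.conjTranspose_conjTranspose] at h1
    exact h1.symm
  have hΨct : ∀ B : Mat d, Ψ Bᴴ = (Ψ B)ᴴ :=
    psi_conjTranspose Φ Ψ hCP hadj
  have hR : (Ψ (A * Aᴴ) - Ψ A * (Ψ A)ᴴ).PosSemidef := by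
    have hs := schwarz Φ Ψ hCP hTP hadj Aᴴ
    rw [Matrix.conjTranspose_conjTranspose, hΨct A, Matrix.conjTranspose_conjTranspose] at hs
    exact hs
  have e1 : Dᴴ * (σ * D) = (r * D)ᴴ * (r * D) := by
    rw [Matrix.conjTranspose_mul, hrh, ← hrr]
    simp only [Matrix.mul_assoc]
  have hstarc : star c = μ := by rw [hc, Complex.star_def, Complex.conj_conj]
  have hDH : Dᴴ = (Ψ A)ᴴ - μ • Aᴴ := by
    rw [hD, Matrix.conjTranspose_sub, Matrix.conjTranspose_smul, hstarc]
  have hDσ : σ * D = σ * Ψ A - c • X := by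
    rw [hD, Matrix.mul_sub, Matrix.mul_smul, hσA]
  have expand : (Dᴴ * (σ * D)).trace
      = (((Ψ A)ᴴ * (σ * Ψ A)).trace - c * (((Ψ A)ᴴ * X).trace))
        - (μ * ((Aᴴ * (σ * Ψ A)).trace) - (μ * c) * ((Aᴴ * X).trace)) := by
    rw [hDH, hDσ]
    simp only [Matrix.sub_mul, Matrix.mul_sub, Matrix.smul_mul, Matrix.mul_smul, smul_smul,
      Matrix.trace_sub, Matrix.trace_smul, smul_eq_mul]
    ring
  have p2 : ((Ψ A)ᴴ * X).trace = μ * (Aᴴ * X).trace := by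
    rw [← hadj A X, hX, Matrix.mul_smul, Matrix.trace_smul, smul_eq_mul]
  have p3 : (Aᴴ * (σ * Ψ A)).trace = c * ((Xᴴ * A).trace) := by
    have h0 : Aᴴ * (σ * Ψ A) = Xᴴ * Ψ A := by
      rw [← Matrix.mul_assoc]
      congr 1
      rw [← hσh, ← Matrix.conjTranspose_mul, hσA]
    rw [h0, hadj' X A, hX, Matrix.conjTranspose_smul, Matrix.smul_mul, Matrix.trace_smul,
      smul_eq_mul, Complex.star_def, ← hc]
  have hXr : Aᴴ * X = (r * A)ᴴ * (r * A) := by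
    rw [← hσA, ← hrr, Matrix.conjTranspose_mul, hrh]
    simp only [Matrix.mul_assoc]
  have hq : (Xᴴ * A).trace = (Aᴴ * X).trace := by
    have hge : 0 ≤ (Aᴴ * X).trace := by rw [hXr]; exact trace_ctm_self_nonneg _
    have him : ((Aᴴ * X).trace).im = 0 := ((Complex.nonneg_iff.mp hge).2).symm
    have h7 := star_trace (Aᴴ * X)
    rw [Matrix.conjTranspose_mul, Matrix.conjTranspose_conjTranspose] at h7
    rw [← h7, Complex.star_def, Complex.conj_eq_iff_im.mpr him]
  have p1 : ((Ψ A)ᴴ * (σ * Ψ A)).trace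
      = (Aᴴ * X).trace - ((Ψ (A * Aᴴ) - Ψ A * (Ψ A)ᴴ) * σ).trace := by
    have h1 : ((Ψ A)ᴴ * (σ * Ψ A)).trace = ((Ψ A * (Ψ A)ᴴ) * σ).trace := by
      rw [← Matrix.mul_assoc, Matrix.trace_mul_cycle]
    have h2 : (Ψ (A * Aᴴ) * σ).trace = (Aᴴ * X).trace := by
      rw [Matrix.trace_mul_comm]
      have h3 : (σ * Ψ (A * Aᴴ)).trace = (σᴴ * Ψ (A * Aᴴ)).trace := by rw [hσh]
      rw [h3, hadj' σ (A * Aᴴ), hfix, hσh]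
      rw [← Matrix.mul_assoc, Matrix.trace_mul_comm, hσA]
    rw [Matrix.sub_mul, Matrix.trace_sub, h1, h2]
    ring
  have Enonneg : 0 ≤ (Dᴴ * (σ * D)).trace := by
    rw [e1]; exact trace_ctm_self_nonneg _
  have Rσnonneg : 0 ≤ ((Ψ (A * Aᴴ) - Ψ A * (Ψ A)ᴴ) * σ).trace :=
    trace_psd_mul_nonneg hR hσ.posSemidef
  have Eval : (Dᴴ * (σ * D)).trace = -(((Ψ (A * Aᴴ) - Ψ A * (Ψ A)ᴴ) * σ).trace) := by
    rw [expand, p1, p2, p3, hq]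
    rw [← mul_assoc, ← mul_assoc, mul_comm c μ, hμc]
    ring
  have Ezero : (Dᴴ * (σ * D)).trace = 0 := by
    have : (Dᴴ * (σ * D)).trace ≤ 0 := by rw [Eval]; exact neg_nonpos_of_nonneg Rσnonneg
    exact le_antisymm this Enonneg
  have hrD : r * D = 0 := by
    apply trace_ctm_self_eq_zero
    rw [← e1]; exact Ezero
  have hDzero : D = 0 := by
    have h5 : σ * D = 0 := by rw [← hrr, Matrix.mul_assoc, hrD, Matrix.mul_zero]
    calc D = ((t * t) * σ) * D := by rw [hinv, Matrix.one_mul]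
      _ = (t * t) * (σ * D) := by rw [Matrix.mul_assoc]
      _ = 0 := by rw [h5, Matrix.mul_zero]
  rw [hD] at hDzero
  exact sub_eq_zero.mp hDzero

lemma eig_inj_right (Φ Ψ : Module.End ℂ (Mat d))
    (hCP : IsCompletelyPositive Φ) (hTP : IsTracePreserving Φ)
    (hadj : ∀ A B : Mat d, (Aᴴ * Φ B).trace = ((Ψ A)ᴴ * B).trace)
    (σ t : Mat d) (hσ : σ.PosDef) (hfix : Φ σ = σ)
    (hinv : (t * t) * σ = 1)
    (μ : ℂ) (habs : ‖μ‖ = 1) (X : Mat d) (hX : Φ X = μ • X) :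
    Ψ (X * (t * t)) = (starRingEnd ℂ μ) • (X * (t * t)) := by
  set c := (starRingEnd ℂ) μ with hc
  set A := X * (t * t) with hA
  have hμc : μ * c = 1 := by
    rw [hc, Complex.mul_conj, Complex.normSq_eq_norm_sq, habs]; norm_num
  have hcμ : c * μ = 1 := by rw [mul_comm]; exact hμc
  have hσt : σ * (t * t) = 1 := mul_eq_one_comm.mp hinv
  have hAσ : A * σ = X := by rw [hA, Matrix.mul_assoc, hinv, Matrix.mul_one]
  have hσh : σᴴ = σ := hσ.isHermitian
  set r := (open scoped MatrixOrder in CFC.sqrt σ) with hr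
  have hrr : r * r = σ :=
    (open scoped MatrixOrder in CFC.sqrt_mul_sqrt_self σ hσ.posSemidef.nonneg)
  have hrh : rᴴ = r := (open scoped MatrixOrder in (CFC.sqrt_nonneg σ).posSemidef.isHermitian)
  set D := Ψ A - c • A with hD
  clear_value c A r D
  have hadj' : ∀ P Q : Mat d, (Pᴴ * Ψ Q).trace = ((Φ P)ᴴ * Q).trace := fun P Q => by
    have h1 := congrArg star (hadj Q P)
    rw [star_trace, star_trace, Matrix.conjTranspose_mul, Matrix.conjTranspose_mul,
      Matrix.conjTranspose_conjTranspose, Matrix.conjTranspose_conjTranspose] at h1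
    exact h1.symm
  have hstarc : star c = μ := by rw [hc, Complex.star_def, Complex.conj_conj]
  have hR : (Ψ (Aᴴ * A) - (Ψ A)ᴴ * Ψ A).PosSemidef := schwarz Φ Ψ hCP hTP hadj A
  have e1 : D * (σ * Dᴴ) = (D * r) * (D * r)ᴴ := by
    rw [Matrix.conjTranspose_mul, hrh, ← hrr]
    simp only [Matrix.mul_assoc]
  have hDH : σ * Dᴴ = σ * (Ψ A)ᴴ - μ • Xᴴ := by
    rw [hD, Matrix.conjTranspose_sub, Matrix.conjTranspose_smul, hstarc, Matrix.mul_sub,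
      Matrix.mul_smul]
    congr 2
    rw [← hAσ, Matrix.conjTranspose_mul, hσh]
  have expand : (D * (σ * Dᴴ)).trace
      = ((Ψ A * (σ * (Ψ A)ᴴ)).trace - μ * ((Ψ A * Xᴴ).trace))
        - (c * ((A * (σ * (Ψ A)ᴴ)).trace) - (c * μ) * ((A * Xᴴ).trace)) := by
    rw [hDH, hD]
    simp only [Matrix.sub_mul, Matrix.mul_sub, Matrix.smul_mul, Matrix.mul_smul, smul_smul,
      Matrix.trace_sub, Matrix.trace_smul, smul_eq_mul]
    ring
  have p2 : (Ψ A * Xᴴ).trace = c * ((A * Xᴴ).trace) := by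
    rw [Matrix.trace_mul_comm, hadj' X A, hX, Matrix.conjTranspose_smul, Matrix.smul_mul,
      Matrix.trace_smul, smul_eq_mul, Complex.star_def, ← hc, Matrix.trace_mul_comm]
  have p3 : (A * (σ * (Ψ A)ᴴ)).trace = μ * ((Aᴴ * X).trace) := by
    have h0 : A * (σ * (Ψ A)ᴴ) = X * (Ψ A)ᴴ := by rw [← Matrix.mul_assoc, hAσ]
    have h1 : (X * (Ψ A)ᴴ).trace = star ((Ψ A * Xᴴ).trace) := by
      rw [star_trace, Matrix.conjTranspose_mul, Matrix.conjTranspose_conjTranspose]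
    rw [h0, h1, p2, star_mul', hstarc, star_trace, Matrix.conjTranspose_mul,
      Matrix.conjTranspose_conjTranspose, Matrix.trace_mul_comm]
  have hXr : (Aᴴ * X).trace = ((A * r) * (A * r)ᴴ).trace := by
    calc (Aᴴ * X).trace
        = (Aᴴ * ((A * r) * r)).trace := by
          rw [← hAσ, ← hrr]; simp only [Matrix.mul_assoc]
      _ = (((A * r) * r) * Aᴴ).trace := Matrix.trace_mul_comm _ _
      _ = ((A * r) * (r * Aᴴ)).trace := by rw [Matrix.mul_assoc]
      _ = ((A * r) * (A * r)ᴴ).trace := by rw [Matrix.conjTranspose_mul, hrh]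
  have hq : (Aᴴ * X).trace = (A * Xᴴ).trace := by
    have hge : 0 ≤ (Aᴴ * X).trace := by
      rw [hXr]
      have := trace_ctm_self_nonneg ((A * r)ᴴ)
      rwa [Matrix.conjTranspose_conjTranspose] at this
    have him : ((Aᴴ * X).trace).im = 0 := ((Complex.nonneg_iff.mp hge).2).symm
    have h7 := star_trace (Aᴴ * X)
    rw [Matrix.conjTranspose_mul, Matrix.conjTranspose_conjTranspose] at h7
    have h8 : (Xᴴ * A).trace = (Aᴴ * X).trace := by
      rw [← h7, Complex.star_def, Complex.conj_eq_iff_im.mpr him]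
    rw [← h8, Matrix.trace_mul_comm]
  have p1 : (Ψ A * (σ * (Ψ A)ᴴ)).trace
      = (A * Xᴴ).trace - ((Ψ (Aᴴ * A) - (Ψ A)ᴴ * Ψ A) * σ).trace := by
    have h1 : (Ψ A * (σ * (Ψ A)ᴴ)).trace = (((Ψ A)ᴴ * Ψ A) * σ).trace := by
      rw [← Matrix.mul_assoc, Matrix.trace_mul_cycle]
    have h2 : (Ψ (Aᴴ * A) * σ).trace = (A * Xᴴ).trace := by
      rw [Matrix.trace_mul_comm]
      have h3 : (σ * Ψ (Aᴴ * A)).trace = (σᴴ * Ψ (Aᴴ * A)).trace := by rw [hσh]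
      rw [h3, hadj' σ (Aᴴ * A), hfix, hσh]
      rw [Matrix.trace_mul_comm, Matrix.mul_assoc, hAσ, hq]
    rw [Matrix.sub_mul, Matrix.trace_sub, h1, h2]
    ring
  have Enonneg : 0 ≤ (D * (σ * Dᴴ)).trace := by
    rw [e1]
    have := trace_ctm_self_nonneg ((D * r)ᴴ)
    rwa [Matrix.conjTranspose_conjTranspose] at this
  have Rσnonneg : 0 ≤ ((Ψ (Aᴴ * A) - (Ψ A)ᴴ * Ψ A) * σ).trace :=
    trace_psd_mul_nonneg hR hσ.posSemidef
  have Eval : (D * (σ * Dᴴ)).trace = -(((Ψ (Aᴴ * A) - (Ψ A)ᴴ * Ψ A) * σ).trace) := by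
    rw [expand, p1, p2, p3, hq]
    rw [← mul_assoc, ← mul_assoc, mul_comm μ c, hcμ]
    ring
  have Ezero : (D * (σ * Dᴴ)).trace = 0 := by
    have : (D * (σ * Dᴴ)).trace ≤ 0 := by rw [Eval]; exact neg_nonpos_of_nonneg Rσnonneg
    exact le_antisymm this Enonneg
  have hrD : (D * r)ᴴ = 0 := by
    apply trace_ctm_self_eq_zero
    rw [Matrix.conjTranspose_conjTranspose, ← e1]; exact Ezero
  have hDr : D * r = 0 := by
    have := congrArg Matrix.conjTranspose hrD
    rwa [Matrix.conjTranspose_conjTranspose, Matrix.conjTranspose_zero] at this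
  have hDzero : D = 0 := by
    have h5 : D * σ = 0 := by rw [← hrr, ← Matrix.mul_assoc, hDr, Matrix.zero_mul]
    calc D = D * (σ * (t * t)) := by rw [hσt, Matrix.mul_one]
      _ = (D * σ) * (t * t) := by rw [Matrix.mul_assoc]
      _ = 0 := by rw [h5, Matrix.zero_mul]
  rw [hD] at hDzero
  exact sub_eq_zero.mp hDzero

end Inj

section Dim
variable {d : ℕ}

noncomputable def matEuc (d : ℕ) : Mat d ≃ₗ[ℂ] EuclideanSpace ℂ (Fin d × Fin d) where
  toFun := fun M => (WithLp.equiv 2 ((Fin d × Fin d) → ℂ)).symm (fun p => M p.1 p.2)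
  map_add' := fun M N => rfl
  map_smul' := fun a M => rfl
  invFun := fun x => Matrix.of (fun i j => x (i, j))
  left_inv := fun M => rfl
  right_inv := fun x => rfl

lemma inner_matEuc (A B : Mat d) :
    (inner ℂ (matEuc d A) (matEuc d B) : ℂ) = (Aᴴ * B).trace := by
  rw [trace_form]
  rw [PiLp.inner_apply]
  rw [Fintype.sum_prod_type]
  rw [Finset.sum_comm]
  refine Finset.sum_congr rfl fun i _ => Finset.sum_congr rfl fun j _ => ?_
  rw [RCLike.inner_apply']
  rfl

lemma finrank_ker_adjoint (F G : Module.End ℂ (Mat d))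
    (hFG : ∀ A B : Mat d, ((G A)ᴴ * B).trace = (Aᴴ * (F B)).trace) :
    Module.finrank ℂ (LinearMap.ker G) = Module.finrank ℂ (LinearMap.ker F) := by
  classical
  set T : EuclideanSpace ℂ (Fin d × Fin d) →ₗ[ℂ] EuclideanSpace ℂ (Fin d × Fin d) :=
    ((matEuc d).toLinearMap ∘ₗ (F : Mat d →ₗ[ℂ] Mat d)) ∘ₗ (matEuc d).symm.toLinearMap with hT
  have hTapp : ∀ z, T z = matEuc d (F ((matEuc d).symm z)) := fun z => rfl
  have hker : Submodule.map (matEuc d).toLinearMap (LinearMap.ker G) = (LinearMap.range T)ᗮ := by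
    ext x
    rw [Submodule.mem_map, Submodule.mem_orthogonal']
    constructor
    · rintro ⟨Aa, hAa, rfl⟩ y hy
      obtain ⟨z, rfl⟩ := LinearMap.mem_range.mp hy
      rw [LinearMap.mem_ker] at hAa
      rw [hTapp]
      simp only [LinearEquiv.coe_coe]
      have : (inner ℂ ((matEuc d) Aa) (matEuc d (F ((matEuc d).symm z))) : ℂ)
          = (Aaᴴ * F ((matEuc d).symm z)).trace := inner_matEuc _ _
      rw [this, ← hFG, hAa]
      simp
    · intro hx
      refine ⟨(matEuc d).symm x, ?_, by simp⟩
      rw [LinearMap.mem_ker]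
      apply eq_zero_of_forall_trace
      intro B
      rw [hFG]
      have h2 := hx (T (matEuc d B)) (LinearMap.mem_range_self _ _)
      rw [hTapp] at h2
      rw [LinearEquiv.symm_apply_apply] at h2
      have h3 : (inner ℂ (matEuc d ((matEuc d).symm x)) (matEuc d (F B)) : ℂ)
          = (((matEuc d).symm x)ᴴ * F B).trace := inner_matEuc _ _
      rw [LinearEquiv.apply_symm_apply] at h3
      rw [← h3, h2]
  have hkerT : LinearMap.ker T = Submodule.map (matEuc d).toLinearMap (LinearMap.ker F) := by
    ext x
    rw [LinearMap.mem_ker, Submodule.mem_map]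
    constructor
    · intro hx
      refine ⟨(matEuc d).symm x, ?_, by simp⟩
      rw [LinearMap.mem_ker]
      rw [hTapp] at hx
      have := congrArg (matEuc d).symm hx
      rwa [LinearEquiv.symm_apply_apply, map_zero] at this
    · rintro ⟨Aa, hAa, rfl⟩
      rw [LinearMap.mem_ker] at hAa
      rw [hTapp]
      simp only [LinearEquiv.coe_coe, LinearEquiv.symm_apply_apply]
      rw [hAa, map_zero]
  have h1 : Module.finrank ℂ (LinearMap.ker G)
      = Module.finrank ℂ ((LinearMap.range T)ᗮ) := by
    rw [← hker, LinearEquiv.finrank_map_eq]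
  have h2 := Submodule.finrank_add_finrank_orthogonal (K := LinearMap.range T)
  have h3 := LinearMap.finrank_range_add_finrank_ker T
  have h4 : Module.finrank ℂ (LinearMap.ker T) = Module.finrank ℂ (LinearMap.ker F) := by
    rw [hkerT, LinearEquiv.finrank_map_eq]
  omega

end Dim

section Poly

lemma aeval_eig {V : Type*} [AddCommGroup V] [Module ℂ V] (f : Module.End ℂ V) (a : ℂ)
    (x : V) (h : f x = a • x) (q : Polynomial ℂ) :
    (Polynomial.aeval f q) x = q.eval a • x := by
  have hpow : ∀ n : ℕ, (f ^ n) x = a ^ n • x := by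
    intro n
    induction n with
    | zero => simp
    | succ n ih =>
      rw [pow_succ, Module.End.mul_apply, h, _root_.map_smul, ih, smul_smul, ← pow_succ']
  induction q using Polynomial.induction_on' with
  | add p q hp hq => rw [map_add, LinearMap.add_apply, hp, hq, Polynomial.eval_add, add_smul]
  | monomial n b =>
    rw [Polynomial.aeval_monomial, Polynomial.eval_monomial, Module.End.mul_apply, hpow,
      Module.algebraMap_end_apply, smul_smul]

lemma aeval_mem {V : Type*} [AddCommGroup V] [Module ℂ V] (f : Module.End ℂ V)
    (W : Submodule ℂ V) (hW : ∀ x ∈ W, f x ∈ W) (q : Polynomial ℂ) (x : V) (hx : x ∈ W) :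
    (Polynomial.aeval f q) x ∈ W := by
  have hpow : ∀ n : ℕ, (f ^ n) x ∈ W := by
    intro n
    induction n with
    | zero => simpa using hx
    | succ n ih =>
      rw [pow_succ', Module.End.mul_apply]
      exact hW _ ih
  induction q using Polynomial.induction_on' with
  | add p q hp hq => rw [map_add, LinearMap.add_apply]; exact W.add_mem hp hq
  | monomial n b =>
    rw [Polynomial.aeval_monomial, Module.End.mul_apply, Module.algebraMap_end_apply]
    exact W.smul_mem _ (hpow n)

lemma sqrt_invariant {V : Type*} [AddCommGroup V] [Module ℂ V]
    (Dp : Module.End ℂ V) {ι : Type*} [Fintype ι] (v : ι → V) (ν : ι → ℝ)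
    (hν : ∀ i, 0 < ν i) (heig : ∀ i, Dp (v i) = ((ν i : ℝ) : ℂ) • v i)
    (hspan : Submodule.span ℂ (Set.range v) = ⊤)
    (W : Submodule ℂ V) (hW : ∀ x ∈ W, Dp (Dp x) ∈ W) :
    ∀ x ∈ W, Dp x ∈ W := by
  classical
  set s : Finset ℂ := Finset.image (fun i => (((ν i : ℝ) : ℂ)) ^ 2) Finset.univ with hs
  set p : Polynomial ℂ := Lagrange.interpolate s id (fun z => ((Real.sqrt z.re : ℝ) : ℂ)) with hp
  have heval : ∀ i, p.eval ((((ν i : ℝ) : ℂ)) ^ 2) = ((ν i : ℝ) : ℂ) := by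
    intro i
    have hmem : (((ν i : ℝ) : ℂ)) ^ 2 ∈ s := by
      rw [hs]; exact Finset.mem_image.mpr ⟨i, Finset.mem_univ i, rfl⟩
    have h0 := Lagrange.eval_interpolate_at_node
      (fun z => ((Real.sqrt z.re : ℝ) : ℂ)) (Function.injective_id.injOn) hmem
    rw [hp]
    rw [id] at h0
    rw [h0]
    have h2 : ((((ν i : ℝ) : ℂ)) ^ 2).re = (ν i) ^ 2 := by norm_cast
    simp only [h2, Real.sqrt_sq (hν i).le]
  have hD2 : ∀ i, (Dp * Dp) (v i) = ((((ν i : ℝ) : ℂ)) ^ 2) • v i := by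
    intro i
    rw [Module.End.mul_apply, heig, _root_.map_smul, heig, smul_smul, sq]
  have hPD : Polynomial.aeval (Dp * Dp) p = Dp := by
    apply LinearMap.ext_on hspan
    rintro x ⟨i, rfl⟩
    rw [aeval_eig (Dp * Dp) _ _ (hD2 i), heval i, heig i]
  intro x hx
  rw [← hPD]
  exact aeval_mem (Dp * Dp) W (fun y hy => by rw [Module.End.mul_apply]; exact hW y hy) p x hx

end Poly

section Conj
variable {d : ℕ}

lemma diag_std_diag (e f : Fin d → ℂ) (i j : Fin d) :
    diagonal e * single i j (1:ℂ) * diagonal f = (e i * f j) • single i j 1 := by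
  ext a b
  simp only [Matrix.mul_diagonal, Matrix.diagonal_mul, Matrix.smul_apply,
    Matrix.single, Matrix.of_apply, smul_eq_mul]
  split_ifs with h
  · obtain ⟨rfl, rfl⟩ := h; ring
  · ring

lemma sandwich_mul (U P Q : Mat d) (hU' : Uᴴ * U = 1) :
    (U * P * Uᴴ) * (U * Q * Uᴴ) = U * (P * Q) * Uᴴ := by
  have hcancel : ∀ X : Mat d, Uᴴ * (U * X) = X := fun X => by
    rw [← Matrix.mul_assoc, hU', Matrix.one_mul]
  simp only [Matrix.mul_assoc]
  rw [hcancel]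

lemma conj_invariant (a b U : Mat d) (e f : Fin d → ℝ)
    (hU : U * Uᴴ = 1) (hU' : Uᴴ * U = 1)
    (ha : a = U * diagonal (fun i => ((e i : ℝ) : ℂ)) * Uᴴ)
    (hb : b = U * diagonal (fun i => ((f i : ℝ) : ℂ)) * Uᴴ)
    (he : ∀ i, 0 < e i) (hf : ∀ i, 0 < f i)
    (W : Submodule ℂ (Mat d)) (hW : ∀ x ∈ W, a * (a * x * b) * b ∈ W) :
    ∀ x ∈ W, a * x * b ∈ W := by
  set Dp : Module.End ℂ (Mat d) :=
    { toFun := fun M => a * M * b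
      map_add' := fun M N => by simp [Matrix.mul_add, Matrix.add_mul]
      map_smul' := fun cc M => by simp [Matrix.mul_smul, Matrix.smul_mul] } with hDp
  have hDapp : ∀ M : Mat d, Dp M = a * M * b := fun M => rfl
  set v : Fin d × Fin d → Mat d := fun ij => U * single ij.1 ij.2 (1:ℂ) * Uᴴ with hv
  set ν : Fin d × Fin d → ℝ := fun ij => e ij.1 * f ij.2 with hν
  have hνpos : ∀ ij, 0 < ν ij := fun ij => mul_pos (he _) (hf _)
  have heig : ∀ ij, Dp (v ij) = ((ν ij : ℝ) : ℂ) • v ij := by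
    rintro ⟨i, j⟩
    rw [hDapp, hv, ha, hb]
    rw [sandwich_mul U _ _ hU', sandwich_mul U _ _ hU']
    rw [diag_std_diag]
    rw [Matrix.mul_smul, Matrix.smul_mul]
    rw [hν]
    push_cast
    rfl
  have hspan : Submodule.span ℂ (Set.range v) = ⊤ := by
    rw [eq_top_iff]
    rintro M -
    have hM : M = U * (Uᴴ * M * U) * Uᴴ := by
      simp only [← Matrix.mul_assoc]
      rw [hU, Matrix.one_mul, Matrix.mul_assoc, hU, Matrix.mul_one]
    rw [hM, Matrix.matrix_eq_sum_single (Uᴴ * M * U)]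
    simp only [Matrix.mul_sum, Matrix.sum_mul]
    refine Submodule.sum_mem _ fun i _ => Submodule.sum_mem _ fun j _ => ?_
    have h1 : single i j ((Uᴴ * M * U) i j)
        = ((Uᴴ * M * U) i j) • single i j (1:ℂ) := by
      rw [Matrix.smul_single, smul_eq_mul, mul_one]
    rw [h1, Matrix.mul_smul, Matrix.smul_mul]
    exact Submodule.smul_mem _ _ (Submodule.subset_span ⟨(i, j), rfl⟩)
  intro x hx
  have hW2 : ∀ y ∈ W, Dp (Dp y) ∈ W := by
    intro y hy
    rw [hDapp, hDapp]
    exact hW y hy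
  have := sqrt_invariant Dp v ν hνpos heig hspan W hW2 x hx
  rwa [hDapp] at this

end Conj

end PEC

theorem peripheral_eigenvector_correspondence
    (d : ℕ) (Φ Ψ : Module.End ℂ (Mat d))
    (hCP : IsCompletelyPositive Φ) (hTP : IsTracePreserving Φ)
    (hadj : ∀ A B : Mat d, (Aᴴ * Φ B).trace = ((Ψ A)ᴴ * B).trace)
    (σ t : Mat d) (hσ : σ.PosDef) (hfix : Φ σ = σ)
    (ht : t.PosDef) (hinv : (t * t) * σ = 1)
    (μ : ℂ) (habs : ‖μ‖ = 1) (X : Mat d) :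
    (X ≠ 0 ∧ Φ X = μ • X) ↔
      (t * X * t ≠ 0 ∧ Ψ (t * X * t) = (starRingEnd ℂ μ) • (t * X * t)) := by
  classical
  set c := (starRingEnd ℂ) μ with hc
  have hσt : σ * (t * t) = 1 := mul_eq_one_comm.mp hinv
  set s : Mat d := σ * t with hs
  have hst : s * t = 1 := by rw [hs, Matrix.mul_assoc, hσt]
  have hcomm : t * σ = σ * t := by
    calc t * σ = (σ * (t * t)) * (t * σ) := by rw [hσt, Matrix.one_mul]
      _ = σ * (t * ((t * t) * σ)) := by simp only [Matrix.mul_assoc]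
      _ = σ * t := by rw [hinv, Matrix.mul_one]
  have hts : t * s = 1 := by
    rw [hs, ← Matrix.mul_assoc, hcomm, Matrix.mul_assoc, hσt]
  have hstz : ∀ z : Mat d, s * (t * z) = z := fun z => by
    rw [← Matrix.mul_assoc, hst, Matrix.one_mul]
  have htsz : ∀ z : Mat d, t * (s * z) = z := fun z => by
    rw [← Matrix.mul_assoc, hts, Matrix.one_mul]
  clear_value s
  set E := LinearMap.ker (Φ - μ • (1 : Module.End ℂ (Mat d))) with hE
  set Ec := LinearMap.ker (Ψ - c • (1 : Module.End ℂ (Mat d))) with hEc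
  have hmemE : ∀ Y : Mat d, Y ∈ E ↔ Φ Y = μ • Y := fun Y => by
    rw [hE, LinearMap.mem_ker, LinearMap.sub_apply, LinearMap.smul_apply,
      Module.End.one_apply, sub_eq_zero]
  have hmemEc : ∀ Y : Mat d, Y ∈ Ec ↔ Ψ Y = c • Y := fun Y => by
    rw [hEc, LinearMap.mem_ker, LinearMap.sub_apply, LinearMap.smul_apply,
      Module.End.one_apply, sub_eq_zero]
  set LL : Mat d ≃ₗ[ℂ] Mat d :=
    { toFun := fun M => (t * t) * M
      invFun := fun M => σ * M
      map_add' := fun M N => by simp [Matrix.mul_add]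
      map_smul' := fun a M => by simp [Matrix.mul_smul]
      left_inv := fun M => by
        show σ * ((t * t) * M) = M
        rw [← Matrix.mul_assoc, hσt, Matrix.one_mul]
      right_inv := fun M => by
        show (t * t) * (σ * M) = M
        rw [← Matrix.mul_assoc, hinv, Matrix.one_mul] } with hLL
  set RR : Mat d ≃ₗ[ℂ] Mat d :=
    { toFun := fun M => M * (t * t)
      invFun := fun M => M * σ
      map_add' := fun M N => by simp [Matrix.add_mul]
      map_smul' := fun a M => by simp [Matrix.smul_mul]
      left_inv := fun M => by
        show (M * (t * t)) * σ = M
        rw [Matrix.mul_assoc, hinv, Matrix.mul_one]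
      right_inv := fun M => by
        show (M * σ) * (t * t) = M
        rw [Matrix.mul_assoc, hσt, Matrix.mul_one] } with hRR
  have hdim : Module.finrank ℂ Ec = Module.finrank ℂ E := by
    rw [hE, hEc]
    apply PEC.finrank_ker_adjoint
    intro A B
    have h1 := hadj A B
    have hstarc : star c = μ := by rw [hc, Complex.star_def, Complex.conj_conj]
    simp only [LinearMap.sub_apply, LinearMap.smul_apply, Module.End.one_apply,
      Matrix.conjTranspose_sub, Matrix.conjTranspose_smul, Matrix.sub_mul, Matrix.mul_sub,
      Matrix.smul_mul, Matrix.mul_smul, Matrix.trace_sub, Matrix.trace_smul, smul_eq_mul, hstarc]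
    rw [h1]
  have hmapL : Submodule.map LL.toLinearMap E = Ec := by
    apply Submodule.eq_of_le_of_finrank_le
    · rintro x ⟨Y, hY, rfl⟩
      rw [hmemEc]
      exact PEC.eig_inj_left Φ Ψ hCP hTP hadj σ t hσ hfix hinv μ habs Y ((hmemE Y).mp hY)
    · rw [LinearEquiv.finrank_map_eq]
      exact le_of_eq hdim
  have hmapR : Submodule.map RR.toLinearMap E = Ec := by
    apply Submodule.eq_of_le_of_finrank_le
    · rintro x ⟨Y, hY, rfl⟩
      rw [hmemEc]
      exact PEC.eig_inj_right Φ Ψ hCP hTP hadj σ t hσ hfix hinv μ habs Y ((hmemE Y).mp hY)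
    · rw [LinearEquiv.finrank_map_eq]
      exact le_of_eq hdim
  -- spectral data for t and s
  have htH : t.IsHermitian := ht.1
  set ev := htH.eigenvalues with hev
  have hevpos : ∀ i, 0 < ev i := fun i => ht.eigenvalues_pos i
  set U : Mat d := (htH.eigenvectorUnitary : Mat d) with hU
  have hU1 : U * Uᴴ = 1 := by
    rw [← Matrix.star_eq_conjTranspose]
    exact Matrix.mem_unitaryGroup_iff.mp (htH.eigenvectorUnitary).2
  have hU2 : Uᴴ * U = 1 := by
    rw [← Matrix.star_eq_conjTranspose]
    exact Matrix.mem_unitaryGroup_iff'.mp (htH.eigenvectorUnitary).2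
  have htspec : t = U * diagonal (fun i => ((ev i : ℝ) : ℂ)) * Uᴴ := by
    conv_lhs => rw [htH.spectral_theorem]
    simp only [Matrix.star_eq_conjTranspose, Function.comp_def]
    rw [hU, hev]
    rfl
  have hsspec : s = U * diagonal (fun i => (((ev i)⁻¹ : ℝ) : ℂ)) * Uᴴ := by
    have hfun : (fun i => ((((ev i)⁻¹ : ℝ) : ℂ)) * ((ev i : ℝ) : ℂ)) = fun _ => (1:ℂ) := by
      funext i
      rw [← Complex.ofReal_mul, inv_mul_cancel₀ (hevpos i).ne']
      norm_num
    have hdiag1 : Matrix.diagonal (fun _ : Fin d => (1:ℂ)) = 1 := Matrix.diagonal_one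
    have hs't : (U * diagonal (fun i => (((ev i)⁻¹ : ℝ) : ℂ)) * Uᴴ) * t = 1 := by
      conv_lhs => rw [htspec]
      rw [PEC.sandwich_mul U _ _ hU2, Matrix.diagonal_mul_diagonal, hfun,
        hdiag1, Matrix.mul_one, hU1]
    calc s = s * (t * (U * diagonal (fun i => (((ev i)⁻¹ : ℝ) : ℂ)) * Uᴴ)) := by
          have htp : t * (U * diagonal (fun i => (((ev i)⁻¹ : ℝ) : ℂ)) * Uᴴ) = 1 := by
            conv_lhs => rw [htspec]
            rw [PEC.sandwich_mul U _ _ hU2, Matrix.diagonal_mul_diagonal]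
            have hfun' : (fun i => (((ev i : ℝ) : ℂ)) * ((((ev i)⁻¹ : ℝ)) : ℂ)) = fun _ => (1:ℂ) := by
              funext i
              rw [← Complex.ofReal_mul, mul_inv_cancel₀ (hevpos i).ne']
              norm_num
            rw [hfun', hdiag1, Matrix.mul_one, hU1]
          rw [htp, Matrix.mul_one]
      _ = (s * t) * (U * diagonal (fun i => (((ev i)⁻¹ : ℝ) : ℂ)) * Uᴴ) := by
          rw [← Matrix.mul_assoc]
      _ = U * diagonal (fun i => (((ev i)⁻¹ : ℝ) : ℂ)) * Uᴴ := by rw [hst, Matrix.one_mul]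
  have hEcInv : ∀ x ∈ Ec, s * x * t ∈ Ec := by
    apply PEC.conj_invariant s t U (fun i => (ev i)⁻¹) ev hU1 hU2 hsspec htspec
      (fun i => inv_pos.mpr (hevpos i)) hevpos
    intro x hx
    rw [← hmapL] at hx
    obtain ⟨y, hy, rfl⟩ := hx
    have hLLy : LL.toLinearMap y = (t * t) * y := rfl
    rw [hLLy]
    have hid : s * (s * ((t * t) * y) * t) * t = y * (t * t) := by
      simp only [Matrix.mul_assoc]
      rw [hstz, hstz]
    rw [hid, ← hmapR]
    exact ⟨y, hy, rfl⟩
  have hEInv : ∀ y ∈ E, t * y * s ∈ E := by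
    apply PEC.conj_invariant t s U ev (fun i => (ev i)⁻¹) hU1 hU2 htspec hsspec
      hevpos (fun i => inv_pos.mpr (hevpos i))
    intro y hy
    have h1 : (t * t) * y ∈ Ec := by
      rw [← hmapL]; exact ⟨y, hy, rfl⟩
    rw [← hmapR] at h1
    obtain ⟨z, hz, hz2⟩ := h1
    have hz2' : z * (t * t) = (t * t) * y := hz2
    have e3 : (t * t) * (s * s) = 1 := by
      have : (t * t) * (s * s) = t * ((t * s) * s) := by simp only [Matrix.mul_assoc]
      rw [this, hts, Matrix.one_mul, hts]
    have hid : t * (t * y * s) * s = z := by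
      calc t * (t * y * s) * s = ((t * t) * y) * (s * s) := by simp only [Matrix.mul_assoc]
        _ = (z * (t * t)) * (s * s) := by rw [hz2']
        _ = z * ((t * t) * (s * s)) := by rw [Matrix.mul_assoc]
        _ = z := by rw [e3, Matrix.mul_one]
    rw [hid]
    exact hz
  constructor
  · rintro ⟨hX0, hXeig⟩
    have hA : (t * t) * X ∈ Ec := by
      rw [← hmapL]; exact ⟨X, (hmemE X).mpr hXeig, rfl⟩
    have h2 := hEcInv _ hA
    have hidt : s * ((t * t) * X) * t = t * X * t := by
      simp only [Matrix.mul_assoc]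
      rw [hstz]
    rw [hidt] at h2
    refine ⟨?_, (hmemEc _).mp h2⟩
    intro h0
    apply hX0
    have hXb : s * (t * X * t) * s = X := by
      simp only [Matrix.mul_assoc]
      rw [hts, Matrix.mul_one, hstz]
    rw [← hXb, h0, Matrix.mul_zero, Matrix.zero_mul]
  · rintro ⟨hT0, hTeig⟩
    have hTXt : t * X * t ∈ Ec := (hmemEc _).mpr hTeig
    rw [← hmapL] at hTXt
    obtain ⟨y, hy, hyx⟩ := hTXt
    have hyx' : (t * t) * y = t * X * t := hyx
    have hty : t * y = X * t := by
      have h5 := congrArg (fun M => s * M) hyx'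
      rw [show s * ((t * t) * y) = t * y from by
            simp only [Matrix.mul_assoc]; rw [hstz],
          show s * (t * X * t) = X * t from by
            simp only [Matrix.mul_assoc]; rw [hstz]] at h5
      exact h5
    have hy2 : y = s * X * t := by
      have h6 := congrArg (fun M => s * M) hty
      rw [hstz] at h6
      rw [h6, ← Matrix.mul_assoc]
    have hXE : X ∈ E := by
      have h3 := hEInv y hy
      rw [hy2] at h3
      have hXb : t * (s * X * t) * s = X := by
        simp only [Matrix.mul_assoc]
        rw [hts, Matrix.mul_one, htsz]
      rwa [hXb] at h3
    refine ⟨?_, (hmemE X).mp hXE⟩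
    intro h0
    apply hT0
    rw [h0, Matrix.mul_zero, Matrix.zero_mul]
end

section
/- Let Φ be a faithful quantum channel with full-rank fixed state σ and Petz recovery map Φ‡(X) = ∑_k σ^{1/2} A_k† σ^{-1/2} X σ^{-1/2} A_k σ^{1/2}. Then for every peripheral eigenvector X (Φ X = λ X, |λ| = 1) one has Φ‡(X) = λ̄ X; consequently Φ‡ Φ (X) = X = Φ Φ‡(X) for all X in Attr(Φ). -/
open Matrix
open scoped ComplexOrder

lemma sum_trace_mul_conjTranspose_zero {d N : ℕ} (M : Fin N → Mat d)
    (h : ∑ k, ((M k) * (M k)ᴴ).trace = 0) : ∀ k, M k = 0 := by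
  have key : ∑ k, ∑ i, ∑ j, Complex.normSq (M k i j) = 0 := by
    have h2 : ∑ k, ((M k) * (M k)ᴴ).trace
        = ((∑ k, ∑ i, ∑ j, Complex.normSq (M k i j) : ℝ) : ℂ) := by
      push_cast
      refine Finset.sum_congr rfl fun k _ => ?_
      simp [Matrix.trace, Matrix.diag, Matrix.mul_apply, Matrix.conjTranspose_apply,
        Complex.mul_conj]
    rw [h2] at h
    exact_mod_cast h
  intro k
  ext i j
  have h1 : ∀ k ∈ (Finset.univ : Finset (Fin N)),
      (0:ℝ) ≤ ∑ i, ∑ j, Complex.normSq (M k i j) := fun k _ =>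
    Finset.sum_nonneg fun i _ => Finset.sum_nonneg fun j _ => Complex.normSq_nonneg _
  have h2 := (Finset.sum_eq_zero_iff_of_nonneg h1).mp key k (Finset.mem_univ k)
  have h3 : ∀ i ∈ (Finset.univ : Finset (Fin d)),
      (0:ℝ) ≤ ∑ j, Complex.normSq (M k i j) := fun i _ =>
    Finset.sum_nonneg fun j _ => Complex.normSq_nonneg _
  have h4 := (Finset.sum_eq_zero_iff_of_nonneg h3).mp h2 i (Finset.mem_univ i)
  have h5 := (Finset.sum_eq_zero_iff_of_nonneg
    (fun j _ => Complex.normSq_nonneg (M k i j))).mp h4 j (Finset.mem_univ j)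
  simpa using Complex.normSq_eq_zero.mp h5

lemma keyA {d N : ℕ} (A : Fin N → Mat d) (σ s t : Mat d)
    (hTP : ∑ k, (A k)ᴴ * A k = 1)
    (hfix : ∑ k, A k * σ * (A k)ᴴ = σ)
    (hss : s * s = σ) (hts : t * s = 1) (hst : s * t = 1)
    (hsH : sᴴ = s) (htH : tᴴ = t)
    (μ : ℂ) (hμ : μ * (starRingEnd ℂ μ) = 1)
    (X : Mat d) (hX : ∑ k, A k * X * (A k)ᴴ = μ • X) :
    ∀ k, A k * (X * (t * t)) = μ • (X * (t * t) * A k) := by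
  have can1 : ∀ M : Mat d, M * t * s = M := fun M => by rw [mul_assoc, hts, mul_one]
  have can2 : ∀ M : Mat d, M * s * t = M := fun M => by rw [mul_assoc, hst, mul_one]
  have hμ' : (starRingEnd ℂ μ) * μ = 1 := by rw [mul_comm]; exact hμ
  have hXH : ∑ k, A k * Xᴴ * (A k)ᴴ = (starRingEnd ℂ μ) • Xᴴ := by
    have := congrArg conjTranspose hX
    simpa only [conjTranspose_sum, conjTranspose_mul, conjTranspose_smul,
      conjTranspose_conjTranspose, ← mul_assoc, RingHom.id_apply, starRingEnd_apply] using this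
  set M : Fin N → Mat d := fun k => (A k * (X * (t * t)) - μ • ((X * (t * t)) * A k)) * s
    with hM
  have hMM : ∀ k, (M k) * (M k)ᴴ =
      A k * (X * (t * t * Xᴴ)) * (A k)ᴴ
      - (starRingEnd ℂ μ) • (A k * X * (A k)ᴴ * (t * t * Xᴴ))
      - μ • (X * (t * t) * (A k * Xᴴ * (A k)ᴴ))
      + X * (t * t) * (A k * σ * (A k)ᴴ) * (t * t * Xᴴ) := by
    intro k
    rw [hM]
    simp only [starRingEnd_apply, conjTranspose_mul, conjTranspose_sub, conjTranspose_smul,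
      hsH, htH, conjTranspose_conjTranspose]
    simp only [sub_mul, mul_sub, smul_mul_assoc, mul_smul_comm, smul_smul, smul_sub, smul_add]
    simp only [starRingEnd_apply] at hμ hμ'
    simp only [hμ, hμ', one_smul]
    simp only [← hss, ← mul_assoc]
    simp only [can1, can2]
    abel
  have hsum : ∑ k, (M k) * (M k)ᴴ
      = (∑ k, A k * (X * (t * t * Xᴴ)) * (A k)ᴴ) - X * (t * t * Xᴴ) := by
    rw [Finset.sum_congr rfl (fun k _ => hMM k)]
    simp only [Finset.sum_add_distrib, Finset.sum_sub_distrib, ← Finset.smul_sum]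
    rw [← Finset.sum_mul, hX, ← Finset.mul_sum, hXH, ← Finset.sum_mul, ← Finset.mul_sum, hfix]
    have h1 : (starRingEnd ℂ μ) • ((μ • X) * (t * t * Xᴴ)) = X * (t * t * Xᴴ) := by
      rw [smul_mul_assoc, smul_smul, hμ', one_smul]
    have h2 : μ • (X * (t * t) * ((starRingEnd ℂ μ) • Xᴴ)) = X * (t * t * Xᴴ) := by
      rw [mul_smul_comm, smul_smul, hμ, one_smul, mul_assoc]
    have h3 : X * (t * t) * σ * (t * t * Xᴴ) = X * (t * t * Xᴴ) := by
      rw [← hss]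
      simp only [← mul_assoc]
      simp only [can1]
    rw [h1, h2, h3]
    abel
  have htrW : (∑ k, A k * (X * (t * t * Xᴴ)) * (A k)ᴴ).trace = (X * (t * t * Xᴴ)).trace := by
    rw [Matrix.trace_sum]
    calc ∑ k, (A k * (X * (t * t * Xᴴ)) * (A k)ᴴ).trace
        = ∑ k, ((A k)ᴴ * A k * (X * (t * t * Xᴴ))).trace := by
          refine Finset.sum_congr rfl fun k _ => ?_
          rw [Matrix.trace_mul_comm, ← mul_assoc]
      _ = ((∑ k, (A k)ᴴ * A k) * (X * (t * t * Xᴴ))).trace := by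
          rw [Finset.sum_mul, Matrix.trace_sum]
      _ = (X * (t * t * Xᴴ)).trace := by rw [hTP, one_mul]
  have htr : ∑ k, ((M k) * (M k)ᴴ).trace = 0 := by
    rw [← Matrix.trace_sum, hsum, Matrix.trace_sub, htrW, sub_self]
  have hM0 := sum_trace_mul_conjTranspose_zero M htr
  intro k
  have h0 : A k * (X * (t * t)) - μ • ((X * (t * t)) * A k) = 0 := by
    have h1 := congrArg (fun Z => Z * t) (hM0 k)
    simpa only [hM, can2, Matrix.zero_mul] using h1
  exact sub_eq_zero.mp h0
lemma step {d N : ℕ} (A : Fin N → Mat d) (σ s t : Mat d)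
    (hTP : ∑ k, (A k)ᴴ * A k = 1)
    (hfix : ∑ k, A k * σ * (A k)ᴴ = σ)
    (hss : s * s = σ) (hts : t * s = 1) (hst : s * t = 1)
    (hsH : sᴴ = s) (htH : tᴴ = t)
    (μ : ℂ) (hμ : μ * (starRingEnd ℂ μ) = 1)
    (X : Mat d) (hX : ∑ k, A k * X * (A k)ᴴ = μ • X) :
    (∑ k, (s * (A k)ᴴ * t) * (s * X * t) * (t * A k * s)
        = (starRingEnd ℂ μ) • (s * X * t)) ∧
    (∑ k, (s * (A k)ᴴ * t) * (t * X * s) * (t * A k * s)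
        = (starRingEnd ℂ μ) • (t * X * s)) := by
  have can1 : ∀ M : Mat d, M * t * s = M := fun M => by rw [mul_assoc, hts, mul_one]
  have can2 : ∀ M : Mat d, M * s * t = M := fun M => by rw [mul_assoc, hst, mul_one]
  have hμ' : (starRingEnd ℂ μ) * μ = 1 := by rw [mul_comm]; exact hμ
  have hXH : ∑ k, A k * Xᴴ * (A k)ᴴ = (starRingEnd ℂ μ) • Xᴴ := by
    have := congrArg conjTranspose hX
    simpa only [conjTranspose_sum, conjTranspose_mul, conjTranspose_smul,
      conjTranspose_conjTranspose, ← mul_assoc, RingHom.id_apply, starRingEnd_apply] using this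
  have hk := keyA A σ s t hTP hfix hss hts hst hsH htH μ hμ X hX
  have hμc : (starRingEnd ℂ μ) * (starRingEnd ℂ (starRingEnd ℂ μ)) = 1 := by
    rw [Complex.conj_conj]; exact hμ'
  have hkH := keyA A σ s t hTP hfix hss hts hst hsH htH (starRingEnd ℂ μ) hμc Xᴴ hXH
  -- reversed per-k relations
  have hkr : ∀ k, (X * (t * t)) * A k = (starRingEnd ℂ μ) • (A k * (X * (t * t))) := by
    intro k
    rw [hk k, smul_smul, hμ', one_smul]
  have hk2 : ∀ k, (A k)ᴴ * (t * t * X) = (starRingEnd ℂ μ) • ((t * t * X) * (A k)ᴴ) := by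
    intro k
    have h1 := congrArg conjTranspose (hkH k)
    simp only [conjTranspose_mul, conjTranspose_smul, conjTranspose_conjTranspose, htH,
      starRingEnd_apply, star_star] at h1
    -- h1 : (t * t * X) * (A k)ᴴ = μ • ((A k)ᴴ * (t * t * X))  (up to assoc)
    have h2 : (t * t * X) * (A k)ᴴ = μ • ((A k)ᴴ * (t * t * X)) := by
      simpa only [← mul_assoc] using h1
    rw [h2, smul_smul, hμ', one_smul]
  constructor
  · have e1 : ∀ k, (s * (A k)ᴴ * t) * (s * X * t) * (t * A k * s)
        = (starRingEnd ℂ μ) • (s * (((A k)ᴴ * A k) * ((X * (t * t)) * s))) := by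
      intro k
      have r1 : (s * (A k)ᴴ * t) * (s * X * t) * (t * A k * s)
          = s * ((A k)ᴴ * ((X * (t * t)) * A k)) * s := by
        simp only [← mul_assoc]
        simp only [can1, can2]
      rw [r1, hkr k]
      simp only [mul_smul_comm, smul_mul_assoc, ← mul_assoc]
    rw [Finset.sum_congr rfl (fun k _ => e1 k), ← Finset.smul_sum, ← Finset.mul_sum,
      ← Finset.sum_mul, hTP, one_mul]
    congr 1
    simp only [← mul_assoc]
    simp only [can1]
  · have e2 : ∀ k, (s * (A k)ᴴ * t) * (t * X * s) * (t * A k * s)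
        = (starRingEnd ℂ μ) • ((s * (t * t * X)) * (((A k)ᴴ * A k) * s)) := by
      intro k
      have r1 : (s * (A k)ᴴ * t) * (t * X * s) * (t * A k * s)
          = s * (((A k)ᴴ * (t * t * X)) * A k) * s := by
        simp only [← mul_assoc]
        simp only [can1, can2, hst, hts, one_mul]
      rw [r1, hk2 k]
      simp only [mul_smul_comm, smul_mul_assoc, ← mul_assoc]
    rw [Finset.sum_congr rfl (fun k _ => e2 k), ← Finset.smul_sum, ← Finset.mul_sum,
      ← Finset.sum_mul, hTP, one_mul]
    congr 1
    simp only [← mul_assoc]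
    simp only [can1, can2, hst, hts, one_mul]
lemma lemmaM {d : ℕ} (s t : Mat d) (ht : t.PosDef) (hts : t * s = 1) (hst : s * t = 1)
    (W : Submodule ℂ (Mat d)) (hW : ∀ Z ∈ W, t * (t * Z * s) * s ∈ W) :
    ∀ Z ∈ W, t * Z * s ∈ W := by
  have hherm : t.IsHermitian := ht.1
  set e : Fin d → ℝ := hherm.eigenvalues with he
  have hepos : ∀ i, 0 < e i := fun i => ht.eigenvalues_pos i
  set U : Mat d := (hherm.eigenvectorUnitary : Mat d) with hU
  have hU1 : U * star U = 1 := (Matrix.mem_unitaryGroup_iff).mp (hherm.eigenvectorUnitary).2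
  have hU2 : star U * U = 1 := (Matrix.mem_unitaryGroup_iff').mp (hherm.eigenvectorUnitary).2
  set c : Fin d → ℂ := fun i => ((e i : ℝ) : ℂ) with hc
  have hc0 : ∀ i, c i ≠ 0 := fun i => by
    simp only [hc, ne_eq, Complex.ofReal_eq_zero]; exact (hepos i).ne'
  have htU : t = U * diagonal c * star U := hherm.spectral_theorem
  have hsU : s = U * diagonal (fun i => (c i)⁻¹) * star U := by
    have hinv : t * (U * diagonal (fun i => (c i)⁻¹) * star U) = 1 := by
      rw [htU]
      calc U * diagonal c * star U * (U * diagonal (fun i => (c i)⁻¹) * star U)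
          = U * (diagonal c * ((star U * U) * diagonal (fun i => (c i)⁻¹))) * star U := by
            simp only [mul_assoc]
        _ = 1 := by
            rw [hU2, one_mul, diagonal_mul_diagonal]
            simp only [fun i => mul_inv_cancel₀ (hc0 i)]
            rw [diagonal_one, mul_one, hU1]
    calc s = s * (t * (U * diagonal (fun i => (c i)⁻¹) * star U)) := by rw [hinv, mul_one]
      _ = (s * t) * (U * diagonal (fun i => (c i)⁻¹) * star U) := by rw [← mul_assoc]
      _ = U * diagonal (fun i => (c i)⁻¹) * star U := by rw [hst, one_mul]
  -- conjugation computation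
  have conj_T : ∀ M : Matrix (Fin d) (Fin d) ℂ,
      t * (U * M * star U) * s
        = U * (Matrix.of fun i j => c i * (c j)⁻¹ * M i j) * star U := by
    intro M
    rw [htU, hsU]
    have h0 : U * diagonal c * star U * (U * M * star U) * (U * diagonal (fun i => (c i)⁻¹) * star U)
        = U * (diagonal c * ((star U * U) * (M * ((star U * U) * diagonal (fun i => (c i)⁻¹))))) * star U := by
      simp only [mul_assoc]
    rw [h0, hU2, one_mul, one_mul]
    congr 1
    congr 1
    ext i j
    simp only [Matrix.of_apply, diagonal_mul, mul_diagonal]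
    ring
  have rot : ∀ Z : Mat d, U * (star U * Z * U) * star U = Z := by
    intro Z
    calc U * (star U * Z * U) * star U = (U * star U) * (Z * (U * star U)) := by
          simp only [← mul_assoc]
      _ = Z := by rw [hU1, one_mul, mul_one]
  have iter : ∀ (n : ℕ), ∀ Z ∈ W,
      U * (Matrix.of fun i j => (c i * (c j)⁻¹) ^ (2 * n) * (star U * Z * U) i j) * star U ∈ W := by
    intro n
    induction n with
    | zero =>
      intro Z hZ
      have h0 : (Matrix.of fun i j => (c i * (c j)⁻¹) ^ (2 * 0) * (star U * Z * U) i j)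
          = star U * Z * U := by
        ext i j
        simp
      rw [h0, rot]
      exact hZ
    | succ n ih =>
      intro Z hZ
      have h1 := hW _ (ih Z hZ)
      have h2 : t * (U * (Matrix.of fun i j => (c i * (c j)⁻¹) ^ (2 * n) * (star U * Z * U) i j) * star U) * s
          = U * (Matrix.of fun i j => (c i * (c j)⁻¹) ^ (2 * n + 1) * (star U * Z * U) i j) * star U := by
        rw [conj_T]
        congr 1
        congr 1
        ext i j
        simp only [Matrix.of_apply]
        ring
      rw [h2] at h1
      have h3 : t * (U * (Matrix.of fun i j => (c i * (c j)⁻¹) ^ (2 * n + 1) * (star U * Z * U) i j) * star U) * s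
          = U * (Matrix.of fun i j => (c i * (c j)⁻¹) ^ (2 * (n + 1)) * (star U * Z * U) i j) * star U := by
        rw [conj_T]
        congr 1
        congr 1
        ext i j
        simp only [Matrix.of_apply]
        ring
      rw [h3] at h1
      exact h1
  intro Z hZ
  set S : Finset ℝ := Finset.image (fun ij : Fin d × Fin d => (e ij.1 / e ij.2) ^ 2) Finset.univ
    with hS
  set g : Polynomial ℝ := Lagrange.interpolate S id Real.sqrt with hg
  have heval : ∀ i j : Fin d, g.eval ((e i / e j) ^ 2) = e i / e j := by
    intro i j
    have hmem : ((e i / e j) ^ 2) ∈ S := Finset.mem_image_of_mem _ (Finset.mem_univ (i, j))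
    have h1 := Lagrange.eval_interpolate_at_node Real.sqrt (Set.injOn_id _) hmem
    simpa [hg, Real.sqrt_sq (div_pos (hepos i) (hepos j)).le] using h1
  have hqcast : ∀ i j : Fin d, c i * (c j)⁻¹ = (((e i / e j : ℝ)) : ℂ) := by
    intro i j
    rw [hc]
    push_cast
    ring
  have key : t * Z * s = ∑ n ∈ Finset.range (g.natDegree + 1),
      (g.coeff n : ℂ) • (U * (Matrix.of fun i j =>
        (c i * (c j)⁻¹) ^ (2 * n) * (star U * Z * U) i j) * star U) := by
    conv_lhs => rw [← rot Z]
    rw [conj_T]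
    have hsum : ∑ n ∈ Finset.range (g.natDegree + 1),
        (g.coeff n : ℂ) • (U * (Matrix.of fun i j =>
          (c i * (c j)⁻¹) ^ (2 * n) * (star U * Z * U) i j) * star U)
        = U * (∑ n ∈ Finset.range (g.natDegree + 1), (g.coeff n : ℂ) • (Matrix.of fun i j =>
          (c i * (c j)⁻¹) ^ (2 * n) * (star U * Z * U) i j)) * star U := by
      simp only [Finset.mul_sum, Finset.sum_mul, Matrix.mul_smul, Matrix.smul_mul]
    rw [hsum]
    congr 1
    congr 1
    ext i j
    rw [Matrix.sum_apply]
    simp only [Matrix.smul_apply, Matrix.of_apply, smul_eq_mul]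
    have hcast2 : ∀ n : ℕ, (((e i / e j : ℝ)) : ℂ) ^ (2 * n)
        = ((((e i / e j) ^ 2 : ℝ)) : ℂ) ^ n := by
      intro n
      rw [pow_mul]
      push_cast
      ring
    have hval : (((e i / e j : ℝ)) : ℂ)
        = ∑ n ∈ Finset.range (g.natDegree + 1),
            (g.coeff n : ℂ) * ((((e i / e j) ^ 2 : ℝ)) : ℂ) ^ n := by
      rw [show (((e i / e j : ℝ)) : ℂ) = ((g.eval ((e i / e j) ^ 2) : ℝ) : ℂ) by rw [heval i j]]
      rw [Polynomial.eval_eq_sum_range]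
      push_cast
      rfl
    have hq2 : ∀ n : ℕ, (c i * (c j)⁻¹) ^ (2 * n) = ((((e i / e j) ^ 2 : ℝ)) : ℂ) ^ n := by
      intro n
      rw [hqcast i j, hcast2 n]
    simp only [hq2]
    rw [hqcast i j, hval, Finset.sum_mul]
    refine Finset.sum_congr rfl fun n _ => ?_
    ring
  rw [key]
  exact Submodule.sum_mem _ fun n _ => Submodule.smul_mem _ _ (iter n Z hZ)

lemma stepB {d N : ℕ} (A : Fin N → Mat d) (σ s t : Mat d)
    (hTP : ∑ k, (A k)ᴴ * A k = 1)
    (hfix : ∑ k, A k * σ * (A k)ᴴ = σ)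
    (hss : s * s = σ) (hts : t * s = 1) (hst : s * t = 1)
    (hsH : sᴴ = s) (htH : tᴴ = t)
    (ν : ℂ) (hν : ν * (starRingEnd ℂ ν) = 1)
    (Z : Mat d) (hZ : ∑ k, (s * (A k)ᴴ * t) * Z * (t * A k * s) = ν • Z) :
    (∑ k, A k * (s * Z * t) * (A k)ᴴ = (starRingEnd ℂ ν) • (s * Z * t)) ∧
    (∑ k, A k * (t * Z * s) * (A k)ᴴ = (starRingEnd ℂ ν) • (t * Z * s)) := by
  have can1 : ∀ M : Mat d, M * t * s = M := fun M => by rw [mul_assoc, hts, mul_one]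
  have can2 : ∀ M : Mat d, M * s * t = M := fun M => by rw [mul_assoc, hst, mul_one]
  have hTP_B : ∑ k, (s * (A k)ᴴ * t)ᴴ * (s * (A k)ᴴ * t) = 1 := by
    have e : ∀ k, (s * (A k)ᴴ * t)ᴴ * (s * (A k)ᴴ * t) = t * ((A k * σ * (A k)ᴴ) * t) := by
      intro k
      simp only [conjTranspose_mul, conjTranspose_conjTranspose, hsH, htH, ← hss]
      simp only [← mul_assoc]
    rw [Finset.sum_congr rfl fun k _ => e k, ← Finset.mul_sum, ← Finset.sum_mul, hfix, ← hss]
    simp only [← mul_assoc]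
    simp only [hts, one_mul, hst]
  have hfix_B : ∑ k, (s * (A k)ᴴ * t) * σ * (s * (A k)ᴴ * t)ᴴ = σ := by
    have e : ∀ k, (s * (A k)ᴴ * t) * σ * (s * (A k)ᴴ * t)ᴴ = s * (((A k)ᴴ * A k) * s) := by
      intro k
      simp only [conjTranspose_mul, conjTranspose_conjTranspose, hsH, htH, ← hss]
      simp only [← mul_assoc]
      simp only [can1, can2, hts, hst, one_mul]
    rw [Finset.sum_congr rfl fun k _ => e k, ← Finset.mul_sum, ← Finset.sum_mul, hTP, one_mul,
      hss]
  have eBH : ∀ k, (s * (A k)ᴴ * t)ᴴ = t * A k * s := by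
    intro k
    simp only [conjTranspose_mul, conjTranspose_conjTranspose, hsH, htH, ← mul_assoc]
  have hZ' : ∑ k, (s * (A k)ᴴ * t) * Z * (s * (A k)ᴴ * t)ᴴ = ν • Z := by
    rw [Finset.sum_congr rfl fun k _ => by rw [eBH k]]
    exact hZ
  have hstep := step (fun k => s * (A k)ᴴ * t) σ s t hTP_B hfix_B hss hts hst hsH htH ν hν Z hZ'
  obtain ⟨h1, h2⟩ := hstep
  constructor
  · have c1 : ∀ k, (s * (s * (A k)ᴴ * t)ᴴ * t) * (s * Z * t) * (t * (s * (A k)ᴴ * t) * s)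
        = A k * (s * Z * t) * (A k)ᴴ := by
      intro k
      simp only [conjTranspose_mul, conjTranspose_conjTranspose, hsH, htH]
      simp only [← mul_assoc]
      simp only [can1, can2, hts, hst, one_mul]
    rw [← Finset.sum_congr rfl fun k _ => c1 k]
    exact h1
  · have c2 : ∀ k, (s * (s * (A k)ᴴ * t)ᴴ * t) * (t * Z * s) * (t * (s * (A k)ᴴ * t) * s)
        = A k * (t * Z * s) * (A k)ᴴ := by
      intro k
      simp only [conjTranspose_mul, conjTranspose_conjTranspose, hsH, htH]
      simp only [← mul_assoc]
      simp only [can1, can2, hts, hst, one_mul]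
    rw [← Finset.sum_congr rfl fun k _ => c2 k]
    exact h2

/-- Let `Φ(X) = ∑ₖ Aₖ X Aₖᴴ` be a faithful quantum channel with
full-rank fixed state `σ` and Petz recovery map
`Ψ(X) = ∑ₖ σ^{1/2} Aₖᴴ σ^{-1/2} X σ^{-1/2} Aₖ σ^{1/2}`. Then every peripheral eigenvector
`X` of `Φ` (`Φ X = μ X`, `|μ| = 1`) satisfies `Ψ X = conj μ • X`; consequently
`Ψ (Φ X) = X = Φ (Ψ X)` for all `X ∈ Attr(Φ)`. -/
theorem petz_recovery_inverts_on_attractor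
    (d N : ℕ) (A : Fin N → Mat d)
    (hKraus : ∑ k, (A k)ᴴ * A k = 1)
    (Φ : Module.End ℂ (Mat d))
    (hΦ : ∀ X : Mat d, Φ X = ∑ k, A k * X * (A k)ᴴ)
    (σ s t : Mat d) (hσ : σ.PosDef) (hfix : Φ σ = σ)
    (hs : s.PosDef) (hss : s * s = σ)
    (ht : t.PosDef) (hts : t * s = 1)
    (Ψ : Module.End ℂ (Mat d))
    (hΨ : ∀ X : Mat d, Ψ X = ∑ k, (s * (A k)ᴴ * t) * X * (t * A k * s)) :
    (∀ (μ : ℂ) (X : Mat d), ‖μ‖ = 1 → Φ X = μ • X →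
      Ψ X = (starRingEnd ℂ μ) • X) ∧
    (∀ X ∈ attrSubspace Φ, Ψ (Φ X) = X ∧ Φ (Ψ X) = X) := by
  have hst : s * t = 1 := mul_eq_one_comm.mp hts
  have hsH : sᴴ = s := hs.1
  have htH : tᴴ = t := ht.1
  have can1 : ∀ M : Mat d, M * t * s = M := fun M => by rw [mul_assoc, hts, mul_one]
  have can2 : ∀ M : Mat d, M * s * t = M := fun M => by rw [mul_assoc, hst, mul_one]
  have hfixsum : ∑ k, A k * σ * (A k)ᴴ = σ := (hΦ σ).symm.trans hfix
  have main1 : ∀ (μ : ℂ) (X : Mat d), ‖μ‖ = 1 → Φ X = μ • X →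
      Ψ X = (starRingEnd ℂ μ) • X := by
    intro μ X habs hXe
    have hμ1 : μ * (starRingEnd ℂ μ) = 1 := by
      rw [Complex.mul_conj, Complex.normSq_eq_norm_sq, habs]
      norm_num
    have hμ1' : (starRingEnd ℂ μ) * (starRingEnd ℂ (starRingEnd ℂ μ)) = 1 := by
      rw [Complex.conj_conj, mul_comm]
      exact hμ1
    set G : Submodule ℂ (Mat d) := Module.End.eigenspace Ψ (starRingEnd ℂ μ) with hG
    have hWinv : ∀ Z ∈ G, t * (t * Z * s) * s ∈ G := by
      intro Z hZ
      have hZe : Ψ Z = (starRingEnd ℂ μ) • Z := Module.End.mem_eigenspace_iff.mp hZ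
      have hZsum : ∑ k, (s * (A k)ᴴ * t) * Z * (t * A k * s) = (starRingEnd ℂ μ) • Z :=
        (hΨ Z).symm.trans hZe
      have hB := stepB A σ s t hKraus hfixsum hss hts hst hsH htH
        (starRingEnd ℂ μ) hμ1' Z hZsum
      have hB2 : ∑ k, A k * (t * Z * s) * (A k)ᴴ = μ • (t * Z * s) := by
        have := hB.2
        rwa [Complex.conj_conj] at this
      have hA2 := (step A σ s t hKraus hfixsum hss hts hst hsH htH μ hμ1
        (t * Z * s) hB2).2
      rw [Module.End.mem_eigenspace_iff, hΨ]
      exact hA2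
    have hsXt : s * X * t ∈ G := by
      have hXsum : ∑ k, A k * X * (A k)ᴴ = μ • X := (hΦ X).symm.trans hXe
      have hA1 := (step A σ s t hKraus hfixsum hss hts hst hsH htH μ hμ1 X hXsum).1
      rw [Module.End.mem_eigenspace_iff, hΨ]
      exact hA1
    have hfin := lemmaM s t ht hts hst G hWinv (s * X * t) hsXt
    have hid : t * (s * X * t) * s = X := by
      simp only [← mul_assoc]
      simp only [can1, can2, hts, hst, one_mul]
    rw [hid] at hfin
    exact Module.End.mem_eigenspace_iff.mp hfin
  refine ⟨main1, ?_⟩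
  have hK : attrSubspace Φ ≤
      LinearMap.ker ((Ψ ∘ₗ (Φ : Mat d →ₗ[ℂ] Mat d)) - LinearMap.id) ⊓
      LinearMap.ker ((Φ ∘ₗ (Ψ : Mat d →ₗ[ℂ] Mat d)) - LinearMap.id) := by
    refine iSup_le fun μ => iSup_le fun hμabs => fun Y hY => ?_
    have hYe : Φ Y = μ • Y := Module.End.mem_eigenspace_iff.mp hY
    have h1 : Ψ Y = (starRingEnd ℂ μ) • Y := main1 μ Y hμabs hYe
    have hμ1 : μ * (starRingEnd ℂ μ) = 1 := by
      rw [Complex.mul_conj, Complex.normSq_eq_norm_sq, hμabs]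
      norm_num
    have hμ1' : (starRingEnd ℂ μ) * μ = 1 := by rw [mul_comm]; exact hμ1
    rw [Submodule.mem_inf]
    constructor
    · rw [LinearMap.mem_ker, LinearMap.sub_apply, LinearMap.comp_apply, LinearMap.id_apply,
        sub_eq_zero]
      rw [hYe, _root_.map_smul, h1, smul_smul, hμ1, one_smul]
    · rw [LinearMap.mem_ker, LinearMap.sub_apply, LinearMap.comp_apply, LinearMap.id_apply,
        sub_eq_zero]
      rw [h1, _root_.map_smul, hYe, smul_smul, hμ1', one_smul]
  intro X hX
  have hXK := hK hX
  rw [Submodule.mem_inf] at hXK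
  obtain ⟨h1, h2⟩ := hXK
  rw [LinearMap.mem_ker, LinearMap.sub_apply, LinearMap.comp_apply, LinearMap.id_apply,
    sub_eq_zero] at h1 h2
  exact ⟨h1, h2⟩
end
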